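/- Fix real constants k > 0, g > 0, μ₊ > 0, μ₋ > 0, ρ₊ > 0, ρ₋ > 0 and γ_w > 0, γ_d ≥ 0. With λ1f, λ2f, λ1h, λ2h as below and Λ±(m) = (λ1f(m)+λ2h(m) ± √((λ1f(m)−λ2h(m))² + 4·λ1h(m)·λ2f(m)))/2 (real square root), both sequences (Λ₊(m))_{m≥1} and (Λ₋(m))_{m≥1} tend to −∞ as m → ∞. -/

import Mathlib

open Real Filter

private lemma sinh_ge_aux (x : ℝ) (hx : 0 ≤ x) : x ^ 4 / 512 ≤ Real.sinh x := by
  have h1 : x / 4 + 1 ≤ Real.exp (x / 4) := Real.add_one_le_exp _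
  have h2 : Real.exp x = (Real.exp (x / 4)) ^ 4 := by
    rw [show x = ((4:ℕ):ℝ) * (x/4) by push_cast; ring, Real.exp_nat_mul]
    push_cast; ring_nf
  have h3 : Real.exp (-x) ≤ 1 := Real.exp_le_one_iff.mpr (by linarith)
  rw [Real.sinh_eq, h2]
  nlinarith [pow_le_pow_left₀ (by positivity : (0:ℝ) ≤ x/4 + 1) h1 4,
    sq_nonneg (x/4), sq_nonneg (x/4+1), mul_nonneg hx hx]

set_option maxHeartbeats 1000000 in
/-- With surface tension `γ_w > 0`, both eigenvalue sequences `Λ₊(m)` and `Λ₋(m)`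
of the linearized two-phase Muskat operator tend to `−∞` as `m → ∞`. -/
theorem stmt_12
    (k g μp μm ρp ρm γw γd : ℝ)
    (hk : 0 < k) (hg : 0 < g) (hμp : 0 < μp) (hμm : 0 < μm)
    (hρp : 0 < ρp) (hρm : 0 < ρm) (hγw : 0 < γw) (hγd : 0 ≤ γd)
    (l1f l2f l1h l2h : ℕ → ℝ)
    (h1f : ∀ m : ℕ, 1 ≤ m → l1f m =
      -((g * (ρm - ρp) + γw * (m : ℝ) ^ 2) * (k * m) / ((μp + μm) * Real.tanh m)))
    (h2f : ∀ m : ℕ, 1 ≤ m → l2f m =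
      -((g * (ρm - ρp) + γw * (m : ℝ) ^ 2) * (k * m) / ((μp + μm) * Real.sinh m)))
    (h1h : ∀ m : ℕ, 1 ≤ m → l1h m =
      -((g * ρp + γd * (m : ℝ) ^ 2) * (k * m) / ((μp + μm) * Real.sinh m)))
    (h2h : ∀ m : ℕ, 1 ≤ m → l2h m =
      -((g * ρp + γd * (m : ℝ) ^ 2) * (k * m / (μp + μm)) *
        ((μm * (Real.cosh m ^ 2 - 1) + μp * Real.cosh m ^ 2) /
          (μp * Real.sinh m * Real.cosh m))))
    :
    Filter.Tendsto (fun m : ℕ =>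
      (l1f m + l2h m +
        Real.sqrt ((l1f m - l2h m) ^ 2 + 4 * l1h m * l2f m)) / 2)
      Filter.atTop Filter.atBot ∧
    Filter.Tendsto (fun m : ℕ =>
      (l1f m + l2h m -
        Real.sqrt ((l1f m - l2h m) ^ 2 + 4 * l1h m * l2f m)) / 2)
      Filter.atTop Filter.atBot := by
  have hμ : 0 < μp + μm := by linarith
  set c : ℝ := k / (μp + μm) with hc_def
  have hc : 0 < c := by positivity
  set C : ℝ := min 1 (g * ρp) * c with hC_def
  have hCpos : 0 < C := by
    apply mul_pos _ hc
    exact lt_min one_pos (by positivity)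
  have hC1 : C ≤ c := by
    rw [hC_def]
    nlinarith [min_le_left 1 (g * ρp)]
  have hC2 : C ≤ g * ρp * c := by
    rw [hC_def]
    nlinarith [min_le_right 1 (g * ρp)]
  set K1 : ℝ := 512 * (g * ρp + γd) * k / (μp + μm) with hK1_def
  set K2 : ℝ := 512 * (g * ρm + γw) * k / (μp + μm) with hK2_def
  have hK1 : 0 < K1 := by positivity
  have hK2 : 0 < K2 := by positivity
  obtain ⟨N, hN⟩ := exists_nat_gt (max ((1 + g * (ρp - ρm)) / γw) (4 * K1 * K2) + 2)
  -- key eventual bound for Λ₊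
  have key : ∀ᶠ m : ℕ in atTop,
      (l1f m + l2h m + Real.sqrt ((l1f m - l2h m) ^ 2 + 4 * l1h m * l2f m)) / 2
        ≤ -C * m + 1 := by
    filter_upwards [eventually_ge_atTop N] with m hm
    have hm1 : 1 ≤ m := by
      rcases Nat.eq_zero_or_pos m with h | h
      · exfalso
        have h4 : (0:ℝ) < 4 * K1 * K2 := by positivity
        have : (0:ℝ) ≤ max ((1 + g * (ρp - ρm)) / γw) (4 * K1 * K2) :=
          le_trans h4.le (le_max_right _ _)
        have hN0 : (0:ℝ) < N := by linarith
        have : 0 < N := by exact_mod_cast hN0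
        omega
      · exact h
    have hmr : (N : ℝ) ≤ (m : ℝ) := by exact_mod_cast hm
    have hmax : max ((1 + g * (ρp - ρm)) / γw) (4 * K1 * K2) + 2 < (m : ℝ) := by linarith
    have hm0 : (0 : ℝ) < (m : ℝ) := by exact_mod_cast hm1
    have hm1r : (1 : ℝ) ≤ (m : ℝ) := by exact_mod_cast hm1
    have hmsq : (m : ℝ) ≤ (m : ℝ) ^ 2 := by nlinarith
    have hm24 : (m : ℝ) ^ 2 ≤ (m : ℝ) ^ 4 := by nlinarith
    have hs : 0 < Real.sinh (m : ℝ) := Real.sinh_pos_iff.mpr hm0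
    have hch : 1 ≤ Real.cosh (m : ℝ) := Real.one_le_cosh _
    have hch0 : (0:ℝ) < Real.cosh (m : ℝ) := Real.cosh_pos _
    have hslt : Real.sinh (m : ℝ) < Real.cosh (m : ℝ) := Real.sinh_lt_cosh _
    have ht : Real.tanh (m : ℝ) = Real.sinh m / Real.cosh m := Real.tanh_eq_sinh_div_cosh _
    have ht0 : 0 < Real.tanh (m : ℝ) := by rw [ht]; positivity
    have ht1 : Real.tanh (m : ℝ) ≤ 1 := by
      rw [ht, div_le_one hch0]; linarith
    have hsinh_ge : (m : ℝ) ^ 4 / 512 ≤ Real.sinh m := sinh_ge_aux _ (le_of_lt hm0)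
    have h512 : (m : ℝ) ^ 4 ≤ 512 * Real.sinh m := by linarith
    -- A' ≥ 1
    have hA' : 1 ≤ g * (ρm - ρp) + γw * (m : ℝ) ^ 2 := by
      have h1 : (1 + g * (ρp - ρm)) / γw < (m : ℝ) :=
        lt_of_le_of_lt (le_max_left _ _) (by linarith)
      have h2 : 1 + g * (ρp - ρm) < γw * (m : ℝ) := by
        rw [div_lt_iff₀ hγw] at h1; linarith
      nlinarith
    have hB' : g * ρp ≤ g * ρp + γd * (m : ℝ) ^ 2 := by nlinarith
    -- bound 1 : l1f m ≤ -C * m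
    have b1 : l1f m ≤ -C * (m : ℝ) := by
      rw [h1f m hm1, show -C * (m:ℝ) = -(C * m) by ring, neg_le_neg_iff]
      rw [le_div_iff₀ (by positivity)]
      have h2 : c * (m:ℝ) * (μp + μm) = k * m := by rw [hc_def]; field_simp
      have s1 : (C * (m:ℝ) * (μp + μm)) * Real.tanh m ≤ (C * m * (μp + μm)) * 1 :=
        mul_le_mul_of_nonneg_left ht1 (by positivity)
      have s2 : C * ((m:ℝ) * (μp + μm)) ≤ c * ((m:ℝ) * (μp + μm)) :=
        mul_le_mul_of_nonneg_right hC1 (by positivity)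
      have s3 : 1 * (k * (m:ℝ)) ≤ (g * (ρm - ρp) + γw * (m : ℝ) ^ 2) * (k * m) :=
        mul_le_mul_of_nonneg_right hA' (by positivity)
      linarith
    -- bound 2 : l2h m ≤ -C * m
    have b2 : l2h m ≤ -C * (m : ℝ) := by
      rw [h2h m hm1, show -C * (m:ℝ) = -(C * m) by ring, neg_le_neg_iff]
      have hF : 1 ≤ (μm * (Real.cosh (m:ℝ) ^ 2 - 1) + μp * Real.cosh (m:ℝ) ^ 2) /
          (μp * Real.sinh m * Real.cosh m) := by
        rw [le_div_iff₀ (by positivity)]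
        have c1 : (μp * Real.sinh (m:ℝ)) * Real.cosh m ≤ (μp * Real.cosh (m:ℝ)) * Real.cosh m :=
          mul_le_mul_of_nonneg_right
            (mul_le_mul_of_nonneg_left hslt.le hμp.le) hch0.le
        have c2 : 0 ≤ μm * (Real.cosh (m:ℝ) ^ 2 - 1) :=
          mul_nonneg hμm.le (by nlinarith)
        nlinarith
      have hcm : C * (m : ℝ) ≤ (g * ρp) * (k * m / (μp + μm)) := by
        have he : k * (m : ℝ) / (μp + μm) = c * m := by rw [hc_def]; ring
        rw [he]
        calc C * (m:ℝ) ≤ (g * ρp * c) * m := mul_le_mul_of_nonneg_right hC2 hm0.le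
          _ = g * ρp * (c * m) := by ring
      calc C * (m : ℝ) ≤ (g * ρp) * (k * m / (μp + μm)) := hcm
        _ ≤ ((g * ρp + γd * (m:ℝ)^2) * (k * m / (μp + μm))) * 1 := by
            have hkm : 0 ≤ k * (m:ℝ) / (μp + μm) := by positivity
            have := mul_le_mul_of_nonneg_right hB' hkm
            linarith
        _ ≤ _ := by
            apply mul_le_mul_of_nonneg_left hF
            positivity
    -- bound 3 : 4 * l1h m * l2f m ≤ 1
    have b3 : 4 * l1h m * l2f m ≤ 1 := by
      rw [h1h m hm1, h2f m hm1]
      set X1 : ℝ := (g * ρp + γd * (m : ℝ) ^ 2) * (k * m) / ((μp + μm) * Real.sinh m) with hX1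
      set X2 : ℝ := (g * (ρm - ρp) + γw * (m : ℝ) ^ 2) * (k * m) / ((μp + μm) * Real.sinh m) with hX2
      have p1 : 0 ≤ X1 := by rw [hX1]; positivity
      have p2 : 0 ≤ X2 := by
        rw [hX2]
        exact div_nonneg (mul_nonneg (by linarith) (by positivity)) (by positivity)
      have e1 : X1 ≤ K1 / m := by
        rw [hX1, div_le_div_iff₀ (by positivity) hm0]
        have hKe : K1 * ((μp + μm) * Real.sinh m) = 512 * (g * ρp + γd) * k * Real.sinh m := by
          rw [hK1_def]; field_simp
        rw [hKe]
        have t1 : g * ρp * k * ((m:ℝ)^2) ≤ g * ρp * k * ((m:ℝ)^4) :=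
          mul_le_mul_of_nonneg_left hm24 (by positivity)
        have t2 : (g * ρp + γd) * k * ((m:ℝ)^4) ≤ (g * ρp + γd) * k * (512 * Real.sinh m) :=
          mul_le_mul_of_nonneg_left h512 (by positivity)
        nlinarith [mul_nonneg hγd hk.le]
      have e2 : X2 ≤ K2 / m := by
        rw [hX2, div_le_div_iff₀ (by positivity) hm0]
        have hKe : K2 * ((μp + μm) * Real.sinh m) = 512 * (g * ρm + γw) * k * Real.sinh m := by
          rw [hK2_def]; field_simp
        rw [hKe]
        have t1 : g * ρm * k * ((m:ℝ)^2) ≤ g * ρm * k * ((m:ℝ)^4) :=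
          mul_le_mul_of_nonneg_left hm24 (by positivity)
        have t2 : (g * ρm + γw) * k * ((m:ℝ)^4) ≤ (g * ρm + γw) * k * (512 * Real.sinh m) :=
          mul_le_mul_of_nonneg_left h512 (by positivity)
        have t3 : (0:ℝ) ≤ g * ρp * k * ((m:ℝ)^2) := by positivity
        nlinarith
      have hprod : X1 * X2 ≤ (K1 / m) * (K2 / m) :=
        mul_le_mul e1 e2 p2 (by positivity)
      have e3 : (K1 / (m:ℝ)) * (K2 / (m:ℝ)) = K1 * K2 / ((m:ℝ) * (m:ℝ)) :=
        div_mul_div_comm K1 (m:ℝ) K2 (m:ℝ)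
      have hm2pos : (0:ℝ) < (m:ℝ) * (m:ℝ) := mul_pos hm0 hm0
      have e4 : 4 * (K1 * K2 / ((m:ℝ) * (m:ℝ))) ≤ 1 := by
        rw [show 4 * (K1 * K2 / ((m:ℝ) * (m:ℝ))) = (4 * K1 * K2) / ((m:ℝ) * (m:ℝ)) by ring,
          div_le_one hm2pos]
        have h1 : 4 * K1 * K2 + 2 < (m : ℝ) :=
          lt_of_le_of_lt (by linarith [le_max_right ((1 + g * (ρp - ρm)) / γw) (4 * K1 * K2)]) hmax
        have h2 : (m:ℝ) ≤ (m:ℝ) * (m:ℝ) := le_mul_of_one_le_left hm0.le hm1r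
        linarith only [h1, h2]
      calc 4 * -X1 * -X2 = 4 * (X1 * X2) := by ring
        _ ≤ 4 * ((K1 / m) * (K2 / m)) := by linarith only [hprod]
        _ = 4 * (K1 * K2 / ((m:ℝ) * (m:ℝ))) := by rw [e3]
        _ ≤ 1 := e4
    -- combine
    have hsqrt : Real.sqrt ((l1f m - l2h m) ^ 2 + 4 * l1h m * l2f m) ≤ |l1f m - l2h m| + 1 := by
      have h2 : |l1f m - l2h m| ^ 2 = (l1f m - l2h m) ^ 2 := sq_abs _
      have expand : (|l1f m - l2h m| + 1) ^ 2 =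
          (l1f m - l2h m) ^ 2 + 2 * |l1f m - l2h m| + 1 := by
        rw [add_sq, sq_abs]; ring
      have h1 : (l1f m - l2h m) ^ 2 + 4 * l1h m * l2f m ≤ (|l1f m - l2h m| + 1) ^ 2 := by
        rw [expand]
        linarith only [b3, abs_nonneg (l1f m - l2h m)]
      calc Real.sqrt ((l1f m - l2h m) ^ 2 + 4 * l1h m * l2f m)
          ≤ Real.sqrt ((|l1f m - l2h m| + 1) ^ 2) := Real.sqrt_le_sqrt h1
        _ = |l1f m - l2h m| + 1 := Real.sqrt_sq (by positivity)
    rcases abs_cases (l1f m - l2h m) with ⟨habs, _⟩ | ⟨habs, _⟩ <;>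
      · rw [habs] at hsqrt; linarith only [hsqrt, b1, b2]
  have hbnd : Tendsto (fun m : ℕ => -C * (m : ℝ) + 1) atTop atBot := by
    apply tendsto_atBot_add_const_right
    exact Tendsto.const_mul_atTop_of_neg (by linarith : -C < 0) tendsto_natCast_atTop_atTop
  have hplus : Tendsto (fun m : ℕ =>
      (l1f m + l2h m + Real.sqrt ((l1f m - l2h m) ^ 2 + 4 * l1h m * l2f m)) / 2)
      atTop atBot := tendsto_atBot_mono' _ key hbnd
  refine ⟨hplus, tendsto_atBot_mono (fun m => ?_) hplus⟩
  have := Real.sqrt_nonneg ((l1f m - l2h m) ^ 2 + 4 * l1h m * l2f m)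
  linarith
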